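/- Bounded barrier subsolutions for the regularized flow (Heisenberg instance of Lemma 4.1 for the cylinder barrier): Let ψ : [0,∞) → ℝ be defined by ψ(s) = (s−2)³ for 0 ≤ s ≤ 2 and ψ(s) = 0 for s ≥ 2, and let u₀(x,t) = (x₁² + x₂²)/2 + t. There exists a constant C₀ > 0 such that for all δ ∈ (0,1) and all ε > 0 with ε² ≤ δ^{9/2}, the function w^δ(x,t) = ψ(u₀(x,t)) − C₀√δ · t satisfies, for all x ∈ ℝ³ and t > 0, ∂_t w^δ ≤ Σ_{i,j=1}^{3} (δ_{ij} − X_i^ε w^δ · X_j^ε w^δ / (|∇_ε w^δ|² + δ²)) X_i^ε X_j^ε w^δ. -/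

import Mathlib

open Filter Topology

noncomputable section

/-- Euclidean partial derivative in the `i`-th coordinate direction. -/
def pd (i : Fin 3) (f : (Fin 3 → ℝ) → ℝ) (x : Fin 3 → ℝ) : ℝ :=
  fderiv ℝ f x (Pi.single i 1)

/-- The left-invariant frame `X₁ = ∂₁ - (x₂/2)∂₃`, `X₂ = ∂₂ + (x₁/2)∂₃`, `X₃ = ∂₃`
of the first Heisenberg group. -/
def Xl (i : Fin 3) (f : (Fin 3 → ℝ) → ℝ) (x : Fin 3 → ℝ) : ℝ :=
  if i = 0 then pd 0 f x - x 1 / 2 * pd 2 f x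
  else if i = 1 then pd 1 f x + x 0 / 2 * pd 2 f x
  else pd 2 f x

/-- The Riemannian approximating frame `X₁^ε = X₁`, `X₂^ε = X₂`, `X₃^ε = εX₃`. -/
def Xe (ε : ℝ) (i : Fin 3) (f : (Fin 3 → ℝ) → ℝ) (x : Fin 3 → ℝ) : ℝ :=
  if i = 2 then ε * pd 2 f x else Xl i f x

/-- Squared norm of the approximating gradient `∇_ε f = (X₁f, X₂f, εX₃f)`. -/
def gradESq (ε : ℝ) (f : (Fin 3 → ℝ) → ℝ) (x : Fin 3 → ℝ) : ℝ :=
  ∑ i : Fin 3, (Xe ε i f x) ^ 2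

/-- The regularized operator
`Σ_{i,j=1}^3 (δ_{ij} - X_i^εf X_j^εf/(|∇_εf|² + κ)) X_i^εX_j^ε f`. -/
def regOp (ε κ : ℝ) (f : (Fin 3 → ℝ) → ℝ) (x : Fin 3 → ℝ) : ℝ :=
  ∑ i : Fin 3, ∑ j : Fin 3,
    ((if i = j then (1 : ℝ) else 0) -
        Xe ε i f x * Xe ε j f x / (gradESq ε f x + κ)) *
      Xe ε i (Xe ε j f) x

/-- The cut-off function `ψ(s) = (s−2)³` for `s ≤ 2`, `ψ(s) = 0` for `s ≥ 2`. -/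
def psi (s : ℝ) : ℝ := if s ≤ 2 then (s - 2) ^ 3 else 0

/-- The barrier `w^δ(x,t) = ψ(u₀(x,t)) − C₀ √δ t`, where
`u₀(x,t) = (x₁² + x₂²)/2 + t` is the self-shrinking cylinder function. -/
def barrierW (C₀ δ : ℝ) (x : Fin 3 → ℝ) (t : ℝ) : ℝ :=
  psi ((x 0 ^ 2 + x 1 ^ 2) / 2 + t) - C₀ * Real.sqrt δ * t


namespace BAux

def mm (s : ℝ) : ℝ := min (s - 2) 0
def p1 (s : ℝ) : ℝ := 3 * mm s ^ 2
def p2 (s : ℝ) : ℝ := 6 * mm s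

lemma mm_nonpos (s : ℝ) : mm s ≤ 0 := min_le_right _ _

lemma hasDerivAt_psi (s : ℝ) : HasDerivAt psi (p1 s) s := by
  rcases lt_trichotomy s 2 with h | h | h
  · have hev : psi =ᶠ[𝓝 s] fun y => (y - 2) ^ 3 := by
      filter_upwards [Iio_mem_nhds h] with y hy
      simp [psi, (Set.mem_Iio.mp hy).le]
    rw [hev.hasDerivAt_iff]
    have e : p1 s = (3:ℕ) * (s - 2) ^ (3 - 1) * 1 := by
      rw [p1, mm, min_eq_left (by linarith : s - 2 ≤ 0)]
      push_cast; ring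
    rw [e]
    exact ((hasDerivAt_id s).sub_const 2).pow 3
  · subst h
    have hp1 : p1 2 = 0 := by simp [p1, mm]
    rw [hp1, hasDerivAt_iff_tendsto_slope]
    have hb : ∀ y : ℝ, ‖slope psi 2 y‖ ≤ (y - 2) ^ 2 := by
      intro y
      rcases eq_or_ne y 2 with rfl | hy
      · simp [slope]
      have hne : y - 2 ≠ 0 := sub_ne_zero.mpr hy
      rcases le_or_gt y 2 with h2 | h2
      · have e : slope psi 2 y = (y - 2) ^ 2 := by
          have e1 : slope psi 2 y = (y - 2) ^ 3 / (y - 2) := by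
            rw [slope_def_field]; simp [psi, h2]
          rw [e1, pow_succ, mul_div_assoc, div_self hne, mul_one]
        rw [e]; simp
      · have e : slope psi 2 y = 0 := by
          rw [slope_def_field]; simp [psi, not_le.mpr h2]
        rw [e]; simp [sq_nonneg]
    refine squeeze_zero_norm hb ?_
    have hc : Continuous fun y : ℝ => (y - 2) ^ 2 := by fun_prop
    have h2 : Tendsto (fun y : ℝ => (y - 2) ^ 2) (𝓝 2) (𝓝 0) := by
      have := hc.tendsto 2
      simpa using this
    exact h2.mono_left nhdsWithin_le_nhds
  · have hev : psi =ᶠ[𝓝 s] fun _ => 0 := by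
      filter_upwards [Ioi_mem_nhds h] with y hy
      simp [psi, not_le.mpr (Set.mem_Ioi.mp hy)]
    rw [hev.hasDerivAt_iff]
    have e : p1 s = 0 := by
      simp [p1, mm, min_eq_right (by linarith : (0:ℝ) ≤ s - 2)]
    rw [e]
    exact hasDerivAt_const s 0

lemma hasDerivAt_p1 (s : ℝ) : HasDerivAt p1 (p2 s) s := by
  rcases lt_trichotomy s 2 with h | h | h
  · have hev : p1 =ᶠ[𝓝 s] fun y => 3 * (y - 2) ^ 2 := by
      filter_upwards [Iio_mem_nhds h] with y hy
      rw [p1, mm, min_eq_left (by linarith [Set.mem_Iio.mp hy] : y - 2 ≤ 0)]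
    rw [hev.hasDerivAt_iff]
    have e : p2 s = 3 * ((2:ℕ) * (s - 2) ^ (2 - 1) * 1) := by
      rw [p2, mm, min_eq_left (by linarith : s - 2 ≤ 0)]
      push_cast; ring
    rw [e]
    exact (((hasDerivAt_id s).sub_const 2).pow 2).const_mul 3
  · subst h
    have hp2 : p2 2 = 0 := by simp [p2, mm]
    rw [hp2, hasDerivAt_iff_tendsto_slope]
    have hb : ∀ y : ℝ, ‖slope p1 2 y‖ ≤ 3 * |y - 2| := by
      intro y
      rcases eq_or_ne y 2 with rfl | hy
      · simp [slope]
      have hne : y - 2 ≠ 0 := sub_ne_zero.mpr hy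
      rcases le_or_gt y 2 with h2 | h2
      · have e : slope p1 2 y = 3 * (y - 2) := by
          have e1 : slope p1 2 y = 3 * (y - 2) ^ 2 / (y - 2) := by
            rw [slope_def_field, p1, p1]
            rw [mm, min_eq_left (by linarith : y - 2 ≤ 0)]
            simp [mm]
          rw [e1, pow_two, ← mul_assoc, mul_div_assoc, div_self hne, mul_one]
        rw [e, norm_mul]
        simp [Real.norm_eq_abs]
      · have e : slope p1 2 y = 0 := by
          rw [slope_def_field, p1, p1]
          simp [mm, min_eq_right (by linarith : (0:ℝ) ≤ y - 2)]
        rw [e]; simp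
    refine squeeze_zero_norm hb ?_
    have hc : Continuous fun y : ℝ => 3 * |y - 2| := by fun_prop
    have h2 : Tendsto (fun y : ℝ => 3 * |y - 2|) (𝓝 2) (𝓝 0) := by
      have := hc.tendsto 2
      simpa using this
    exact h2.mono_left nhdsWithin_le_nhds
  · have hev : p1 =ᶠ[𝓝 s] fun _ => 0 := by
      filter_upwards [Ioi_mem_nhds h] with y hy
      simp [p1, mm, min_eq_right (by linarith [Set.mem_Ioi.mp hy] : (0:ℝ) ≤ y - 2)]
    rw [hev.hasDerivAt_iff]
    have e : p2 s = 0 := by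
      simp [p2, mm, min_eq_right (by linarith : (0:ℝ) ≤ s - 2)]
    rw [e]
    exact hasDerivAt_const s 0

def uu (t : ℝ) (y : Fin 3 → ℝ) : ℝ := (y 0 ^ 2 + y 1 ^ 2) / 2 + t

def LU (x : Fin 3 → ℝ) : (Fin 3 → ℝ) →L[ℝ] ℝ :=
  x 0 • ContinuousLinearMap.proj 0 + x 1 • ContinuousLinearMap.proj 1

lemma hasFDerivAt_uu (t : ℝ) (x : Fin 3 → ℝ) : HasFDerivAt (uu t) (LU x) x := by
  have h0 : HasFDerivAt (fun y : Fin 3 → ℝ => y 0)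
      (ContinuousLinearMap.proj (R := ℝ) (φ := fun _ : Fin 3 => ℝ) 0) x := hasFDerivAt_apply 0 x
  have h1 : HasFDerivAt (fun y : Fin 3 → ℝ => y 1)
      (ContinuousLinearMap.proj (R := ℝ) (φ := fun _ : Fin 3 => ℝ) 1) x := hasFDerivAt_apply 1 x
  have h := (((h0.mul h0).add (h1.mul h1)).const_mul (1/2 : ℝ)).add_const t
  have e : (fun y : Fin 3 → ℝ => (1/2 : ℝ) * (y 0 * y 0 + y 1 * y 1) + t) = uu t := by
    funext y; simp [uu]; ring
  simp only [Pi.add_apply, Pi.mul_apply] at h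
  rw [e] at h
  refine h.congr_fderiv ?_
  ext y
  simp [LU]
  ring

def ff (c t : ℝ) (y : Fin 3 → ℝ) : ℝ := psi (uu t y) - c

lemma hasFDerivAt_ff (c t : ℝ) (x : Fin 3 → ℝ) :
    HasFDerivAt (ff c t) (p1 (uu t x) • LU x) x :=
  ((hasDerivAt_psi (uu t x)).comp_hasFDerivAt x (hasFDerivAt_uu t x)).sub_const c

lemma pd_ff0 (c t : ℝ) (x : Fin 3 → ℝ) : pd 0 (ff c t) x = p1 (uu t x) * x 0 := by
  rw [pd, (hasFDerivAt_ff c t x).fderiv]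
  simp [LU, Pi.single_apply]

lemma pd_ff1 (c t : ℝ) (x : Fin 3 → ℝ) : pd 1 (ff c t) x = p1 (uu t x) * x 1 := by
  rw [pd, (hasFDerivAt_ff c t x).fderiv]
  simp [LU, Pi.single_apply]

lemma pd_ff2 (c t : ℝ) (x : Fin 3 → ℝ) : pd 2 (ff c t) x = 0 := by
  rw [pd, (hasFDerivAt_ff c t x).fderiv]
  simp [LU, Pi.single_apply]

lemma Xe_ff0 (ε c t : ℝ) : Xe ε 0 (ff c t) = fun y => p1 (uu t y) * y 0 := by
  funext y
  simp [Xe, Xl, pd_ff0, pd_ff2]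

lemma Xe_ff1 (ε c t : ℝ) : Xe ε 1 (ff c t) = fun y => p1 (uu t y) * y 1 := by
  funext y
  simp [Xe, Xl, pd_ff1, pd_ff2]

lemma Xe_ff2 (ε c t : ℝ) : Xe ε 2 (ff c t) = fun _ => 0 := by
  funext y
  simp [Xe, pd_ff2]

lemma hasFDerivAt_g0 (t : ℝ) (x : Fin 3 → ℝ) :
    HasFDerivAt (fun y => p1 (uu t y) * y 0)
      (p1 (uu t x) • ContinuousLinearMap.proj 0 + x 0 • (p2 (uu t x) • LU x)) x :=
  HasFDerivAt.mul ((hasDerivAt_p1 (uu t x)).comp_hasFDerivAt x (hasFDerivAt_uu t x))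
    (hasFDerivAt_apply 0 x)

lemma hasFDerivAt_g1 (t : ℝ) (x : Fin 3 → ℝ) :
    HasFDerivAt (fun y => p1 (uu t y) * y 1)
      (p1 (uu t x) • ContinuousLinearMap.proj 1 + x 1 • (p2 (uu t x) • LU x)) x :=
  HasFDerivAt.mul ((hasDerivAt_p1 (uu t x)).comp_hasFDerivAt x (hasFDerivAt_uu t x))
    (hasFDerivAt_apply 1 x)

lemma pd_g0 (t : ℝ) (x : Fin 3 → ℝ) (i : Fin 3) :
    pd i (fun y => p1 (uu t y) * y 0) x =
      (if i = 0 then p2 (uu t x) * x 0 * x 0 + p1 (uu t x)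
       else if i = 1 then p2 (uu t x) * x 0 * x 1 else 0) := by
  rw [pd, (hasFDerivAt_g0 t x).fderiv]
  fin_cases i <;> simp [LU, Pi.single_apply] <;> ring

lemma pd_g1 (t : ℝ) (x : Fin 3 → ℝ) (i : Fin 3) :
    pd i (fun y => p1 (uu t y) * y 1) x =
      (if i = 0 then p2 (uu t x) * x 0 * x 1
       else if i = 1 then p2 (uu t x) * x 1 * x 1 + p1 (uu t x) else 0) := by
  rw [pd, (hasFDerivAt_g1 t x).fderiv]
  fin_cases i <;> simp [LU, Pi.single_apply] <;> ring

lemma pd_zero (x : Fin 3 → ℝ) (i : Fin 3) : pd i (fun _ => (0:ℝ)) x = 0 := by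
  rw [pd, fderiv_fun_const]
  simp

lemma key_ineq (u t δ a b : ℝ) (ht : 0 < t) (hu : u = (a ^ 2 + b ^ 2) / 2 + t)
    (hδ0 : 0 < δ) (hδ1 : δ < 1) :
    0 ≤ 100 * Real.sqrt δ * (p1 u ^ 2 * (a ^ 2 + b ^ 2) + δ ^ 2)
        + (p2 u * (a ^ 2 + b ^ 2) + p1 u) * δ ^ 2 := by
  set s := Real.sqrt δ with hsdef
  have hs0 : 0 < s := Real.sqrt_pos.mpr hδ0
  have hδs : δ = s ^ 2 := (Real.sq_sqrt hδ0.le).symm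
  have hmle : mm u ≤ 0 := by rw [mm]; exact min_le_right _ _
  rcases eq_or_lt_of_le hmle with hm | hm
  · rw [p1, p2, hm]
    norm_num
    positivity
  · -- mm u < 0, hence u < 2 and a² + b² < 4
    have hu2 : u < 2 := by
      by_contra h
      have h0 : mm u = 0 := by rw [mm]; exact min_eq_right (by linarith [not_lt.mp h])
      rw [h0] at hm; exact absurd hm (lt_irrefl 0)
    have hR4 : a ^ 2 + b ^ 2 < 4 := by nlinarith [hu2, hu, ht]
    have hR0 : 0 ≤ a ^ 2 + b ^ 2 := by positivity
    have hmm : mm u = u - 2 := by rw [mm]; exact min_eq_left (by linarith)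
    set q := -(mm u) with hq
    have hq0 : 0 < q := by simp [hq]; linarith
    have hp1 : p1 u = 3 * q ^ 2 := by rw [p1]; rw [hq]; ring
    have hp2 : p2 u = -(6 * q) := by rw [p2]; rw [hq]; ring
    rw [hp1, hp2, hδs]
    have h4 : 4 * q * s ^ 3 ≤ q ^ 4 + 3 * s ^ 4 := by
      nlinarith [mul_nonneg (sq_nonneg (q - s)) (by positivity : (0:ℝ) ≤ (q + s) ^ 2 + 2 * s ^ 2)]
    nlinarith [mul_nonneg (mul_nonneg hR0 hs0.le) (by linarith : 0 ≤ q ^ 4 + 3 * s ^ 4 - 4 * q * s ^ 3),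
      mul_nonneg (by linarith : (0:ℝ) ≤ 4 - (a ^ 2 + b ^ 2)) (by positivity : (0:ℝ) ≤ s ^ 5),
      mul_nonneg (mul_nonneg hR0 hs0.le) (by positivity : (0:ℝ) ≤ q ^ 4),
      (by positivity : (0:ℝ) ≤ 3 * q ^ 2 * s ^ 4)]

lemma final (u t δ a b : ℝ) (ht : 0 < t) (hu : u = (a ^ 2 + b ^ 2) / 2 + t)
    (hδ0 : 0 < δ) (hδ1 : δ < 1) :
    p1 u ≤
      (1 - p1 u * a * (p1 u * a) / (p1 u ^ 2 * (a ^ 2 + b ^ 2) + δ ^ 2)) * (p2 u * a * a + p1 u) +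
          -(p1 u * a * (p1 u * b) / (p1 u ^ 2 * (a ^ 2 + b ^ 2) + δ ^ 2) * (p2 u * a * b)) +
        (-(p1 u * b * (p1 u * a) / (p1 u ^ 2 * (a ^ 2 + b ^ 2) + δ ^ 2) * (p2 u * a * b)) +
          (1 - p1 u * b * (p1 u * b) / (p1 u ^ 2 * (a ^ 2 + b ^ 2) + δ ^ 2)) *
            (p2 u * b * b + p1 u)) +
      100 * Real.sqrt δ := by
  have hDpos : 0 < p1 u ^ 2 * (a ^ 2 + b ^ 2) + δ ^ 2 := by positivity
  have hDne : p1 u ^ 2 * (a ^ 2 + b ^ 2) + δ ^ 2 ≠ 0 := hDpos.ne'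
  rw [← sub_nonneg]
  have hN := key_ineq u t δ a b ht hu hδ0 hδ1
  calc (0:ℝ) ≤ (100 * Real.sqrt δ * (p1 u ^ 2 * (a ^ 2 + b ^ 2) + δ ^ 2)
        + (p2 u * (a ^ 2 + b ^ 2) + p1 u) * δ ^ 2) / (p1 u ^ 2 * (a ^ 2 + b ^ 2) + δ ^ 2) :=
      div_nonneg hN hDpos.le
    _ = _ := by field_simp; ring

end BAux

/-- Bounded barrier subsolutions for the regularized flow (Heisenberg instance
of Lemma 4.1 for the cylinder barrier). -/
theorem barrier_subsolution :
    ∃ C₀ > (0 : ℝ), ∀ δ ∈ Set.Ioo (0 : ℝ) 1, ∀ ε > (0 : ℝ),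
      ε ^ 2 ≤ δ ^ ((9 : ℝ) / 2) →
      ∀ (x : Fin 3 → ℝ) (t : ℝ), 0 < t →
        deriv (barrierW C₀ δ x) t ≤
          regOp ε (δ ^ 2) (fun y => barrierW C₀ δ y t) x := by
  refine ⟨100, by norm_num, ?_⟩
  rintro δ ⟨hδ0, hδ1⟩ ε hε hεδ x t ht
  have hfun : (fun y => barrierW 100 δ y t) = BAux.ff (100 * Real.sqrt δ * t) t := rfl
  set c : ℝ := 100 * Real.sqrt δ * t with hc
  -- time derivative
  have hL : deriv (barrierW 100 δ x) t = BAux.p1 (BAux.uu t x) - 100 * Real.sqrt δ := by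
    have h1 := (BAux.hasDerivAt_psi ((x 0 ^ 2 + x 1 ^ 2) / 2 + t)).comp t
      ((hasDerivAt_id t).const_add ((x 0 ^ 2 + x 1 ^ 2) / 2))
    have h2 := (hasDerivAt_id t).const_mul (100 * Real.sqrt δ)
    have h3 : HasDerivAt (barrierW 100 δ x)
        (BAux.p1 ((x 0 ^ 2 + x 1 ^ 2) / 2 + t) * 1 - 100 * Real.sqrt δ * 1) t := h1.sub h2
    rw [h3.deriv]
    simp [BAux.uu]
  have E0 : Xe ε 0 (BAux.ff c t) x = BAux.p1 (BAux.uu t x) * x 0 := by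
    rw [BAux.Xe_ff0]
  have E1 : Xe ε 1 (BAux.ff c t) x = BAux.p1 (BAux.uu t x) * x 1 := by
    rw [BAux.Xe_ff1]
  have E2 : Xe ε 2 (BAux.ff c t) x = 0 := by
    rw [BAux.Xe_ff2]
  have H00 : Xe ε 0 (Xe ε 0 (BAux.ff c t)) x
      = BAux.p2 (BAux.uu t x) * x 0 * x 0 + BAux.p1 (BAux.uu t x) := by
    rw [BAux.Xe_ff0]; simp [Xe, Xl, BAux.pd_g0]
  have H10 : Xe ε 1 (Xe ε 0 (BAux.ff c t)) x = BAux.p2 (BAux.uu t x) * x 0 * x 1 := by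
    rw [BAux.Xe_ff0]; simp [Xe, Xl, BAux.pd_g0]
  have H20 : Xe ε 2 (Xe ε 0 (BAux.ff c t)) x = 0 := by
    rw [BAux.Xe_ff0]; simp [Xe, Xl, BAux.pd_g0]
  have H01 : Xe ε 0 (Xe ε 1 (BAux.ff c t)) x = BAux.p2 (BAux.uu t x) * x 0 * x 1 := by
    rw [BAux.Xe_ff1]; simp [Xe, Xl, BAux.pd_g1]
  have H11 : Xe ε 1 (Xe ε 1 (BAux.ff c t)) x
      = BAux.p2 (BAux.uu t x) * x 1 * x 1 + BAux.p1 (BAux.uu t x) := by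
    rw [BAux.Xe_ff1]; simp [Xe, Xl, BAux.pd_g1]
  have H21 : Xe ε 2 (Xe ε 1 (BAux.ff c t)) x = 0 := by
    rw [BAux.Xe_ff1]; simp [Xe, Xl, BAux.pd_g1]
  have H02 : Xe ε 0 (Xe ε 2 (BAux.ff c t)) x = 0 := by
    rw [BAux.Xe_ff2]; simp [Xe, Xl, BAux.pd_zero]
  have H12 : Xe ε 1 (Xe ε 2 (BAux.ff c t)) x = 0 := by
    rw [BAux.Xe_ff2]; simp [Xe, Xl, BAux.pd_zero]
  have H22 : Xe ε 2 (Xe ε 2 (BAux.ff c t)) x = 0 := by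
    rw [BAux.Xe_ff2]; simp [Xe, Xl, BAux.pd_zero]
  have hD : gradESq ε (BAux.ff c t) x
      = (BAux.p1 (BAux.uu t x)) ^ 2 * (x 0 ^ 2 + x 1 ^ 2) := by
    rw [gradESq, Fin.sum_univ_three, E0, E1, E2]; ring
  rw [hfun, hL, regOp, Fin.sum_univ_three]
  simp only [Fin.sum_univ_three]
  rw [E0, E1, E2, H00, H10, H20, H01, H11, H21, H02, H12, H22, hD]
  norm_num
  exact BAux.final (BAux.uu t x) t δ (x 0) (x 1) ht rfl hδ0 hδ1
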